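/- Let n ∈ ℤ and let σ, φ be homeomorphisms of a compact totally disconnected Hausdorff space X with σ² = id and σφσ = φ⁻¹. Let U ⊆ X be a clopen set with φⁿσ(U) = U and U ∩ Fix_{φⁿσ} = ∅. Then there exists a clopen V ⊆ U with U = V ⊔ φⁿσ(V), and the homeomorphism (φⁿσ)_U (equal to φⁿσ on U and the identity elsewhere) equals τ_{φⁿσ, V}, i.e., it is the transposition swapping V and φⁿσ(V) pointwise via φⁿσ. -/

import Mathlib

open scoped Classical

private lemma cont_pow {X : Type*} [TopologicalSpace X] (φ : X ≃ₜ X) (k : ℕ) :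
    Continuous ⇑(φ.toEquiv ^ k) := by
  induction k with
  | zero => simpa using continuous_id
  | succ k ih =>
      rw [pow_succ]
      have h : ⇑(φ.toEquiv ^ k * φ.toEquiv) = ⇑(φ.toEquiv ^ k) ∘ ⇑φ.toEquiv := rfl
      rw [h]
      exact ih.comp φ.continuous

private lemma cont_zpow {X : Type*} [TopologicalSpace X] (φ : X ≃ₜ X) (n : ℤ) :
    Continuous ⇑(φ.toEquiv ^ n) := by
  cases n with
  | ofNat k => rw [Int.ofNat_eq_coe, zpow_natCast]; exact cont_pow φ k
  | negSucc k =>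
      rw [zpow_negSucc, ← inv_pow]
      have h : φ.toEquiv⁻¹ = φ.symm.toEquiv := rfl
      rw [h]
      exact cont_pow φ.symm (k + 1)

private lemma core_lemma {X : Type*} [TopologicalSpace X] [CompactSpace X] [T2Space X]
    [TotallyDisconnectedSpace X] (g : X ≃ X) (hc : Continuous ⇑g) (hc' : Continuous ⇑g.symm)
    (U : Set X) (hU : IsClopen U)
    (hfree : ∀ x ∈ U, g x ≠ x) (hg2 : ∀ x, g (g x) = x) :
    ∃ V : Set X, IsClopen V ∧ V ⊆ U ∧ Disjoint V (⇑g '' V) ∧ U ⊆ V ∪ ⇑g '' V := by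
  have himg : ∀ s : Set X, IsClopen s → IsClopen (⇑g '' s) := by
    intro s hs
    rw [Equiv.image_eq_preimage_symm]
    exact hs.preimage hc'
  -- local clopen separation around each point of U
  have hsep : ∀ i : U, ∃ W : Set X,
      IsClopen W ∧ (i : X) ∈ W ∧ W ⊆ U ∧ Disjoint W (⇑g '' W) := by
    rintro ⟨x, hx⟩
    obtain ⟨A, B, hA, hB, hgA, hxB, hAB⟩ := t2_separation (hfree x hx)
    have hopen : IsOpen (U ∩ B ∩ ⇑g ⁻¹' A) :=
      (hU.isOpen.inter hB).inter (hA.preimage hc)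
    have hxO : x ∈ U ∩ B ∩ ⇑g ⁻¹' A := ⟨⟨hx, hxB⟩, hgA⟩
    obtain ⟨W, hWclopen, hxW, hWsub⟩ := compact_exists_isClopen_in_isOpen hopen hxO
    refine ⟨W, hWclopen, hxW, fun y hy => (hWsub hy).1.1, ?_⟩
    rw [Set.disjoint_left]
    rintro y hy ⟨z, hz, rfl⟩
    exact hAB.le_bot ⟨(hWsub hz).2, (hWsub hy).1.2⟩
  choose W hWclopen hWmem hWsub hWdisj using hsep
  have hcover : U ⊆ ⋃ i : U, W i := fun x hx =>
    Set.mem_iUnion.2 ⟨⟨x, hx⟩, hWmem ⟨x, hx⟩⟩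
  obtain ⟨t, ht⟩ := (hU.isClosed.isCompact).elim_finite_subcover W
    (fun i => (hWclopen i).isOpen) hcover
  -- greedy construction by induction on the finite cover
  have key : ∀ s : Finset U, ∃ V : Set X, IsClopen V ∧ V ⊆ U ∧
      Disjoint V (⇑g '' V) ∧ (⋃ i ∈ s, W i) ⊆ V ∪ ⇑g '' V := by
    intro s
    induction s using Finset.induction_on with
    | empty => exact ⟨∅, isClopen_empty, Set.empty_subset U, by simp, by simp⟩
    | @insert a s ha ih =>
        obtain ⟨V, h1, h2, h3, h4⟩ := ih
        set A : Set X := W a \ (V ∪ ⇑g '' V) with hA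
        refine ⟨V ∪ A, h1.union ((hWclopen a).diff (h1.union (himg V h1))),
          Set.union_subset h2 (fun x hx => hWsub a hx.1), ?_, ?_⟩
        · rw [Set.image_union, Set.disjoint_left]
          rintro x hx hx'
          rcases hx with hxV | hxA
          · rcases hx' with hxg | ⟨y, hyA, rfl⟩
            · exact (Set.disjoint_left.1 h3) hxV hxg
            · exact hyA.2 (Or.inr ⟨g y, hxV, hg2 y⟩)
          · rcases hx' with hxg | ⟨y, hyA, rfl⟩
            · exact hxA.2 (Or.inr hxg)
            · exact (Set.disjoint_left.1 (hWdisj a)) hxA.1 ⟨y, hyA.1, rfl⟩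
        · intro x hx
          simp only [Set.mem_iUnion, Finset.mem_insert] at hx
          obtain ⟨i, hi | hi, hxW⟩ := hx
          · subst hi
            by_cases hxv : x ∈ V ∪ ⇑g '' V
            · rcases hxv with h | h
              · exact Or.inl (Or.inl h)
              · exact Or.inr (Set.image_mono Set.subset_union_left h)
            · exact Or.inl (Or.inr ⟨hxW, hxv⟩)
          · have : x ∈ V ∪ ⇑g '' V := h4 (Set.mem_biUnion hi hxW)
            rcases this with h | h
            · exact Or.inl (Or.inl h)
            · exact Or.inr (Set.image_mono Set.subset_union_left h)
  obtain ⟨V, h1, h2, h3, h4⟩ := key t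
  exact ⟨V, h1, h2, h3, fun x hx => h4 (ht hx)⟩

theorem stmt_13 {X : Type*} [TopologicalSpace X] [CompactSpace X] [T2Space X]
    [TotallyDisconnectedSpace X] (φ σ : X ≃ₜ X)
    (hσ : ∀ x, σ (σ x) = x) (hrel : ∀ x, σ (φ (σ x)) = φ.symm x)
    (n : ℤ) (U : Set X) (hU : IsClopen U)
    (g : X ≃ X) (hg : g = σ.toEquiv.trans (φ.toEquiv ^ n))
    (hgU : ⇑g '' U = U) (hfree : U ∩ {x | g x = x} = ∅) :
    ∃ V : Set X, IsClopen V ∧ V ⊆ U ∧ Disjoint V (⇑g '' V) ∧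
      U = V ∪ ⇑g '' V ∧
      ∀ x, (if x ∈ U then g x else x) =
        (if x ∈ V then g x else if x ∈ ⇑g '' V then g.symm x else x) := by
  set s : Equiv.Perm X := σ.toEquiv with hs
  set p : Equiv.Perm X := φ.toEquiv with hp
  -- s is an involution (as a perm)
  have hss : s * s = 1 := Equiv.ext fun x => hσ x
  have hsinv : s⁻¹ = s := inv_eq_of_mul_eq_one_right hss
  -- conjugation relation
  have hsps : s * p * s = p⁻¹ := Equiv.ext fun x => hrel x
  have hconj : s * p ^ n * s⁻¹ = (p ^ n)⁻¹ := by
    have h1 : (MulAut.conj s) p = p⁻¹ := by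
      simp only [MulAut.conj_apply, hsinv]
      rw [← hsps]
    calc s * p ^ n * s⁻¹ = (MulAut.conj s) (p ^ n) := by simp [MulAut.conj_apply]
      _ = ((MulAut.conj s) p) ^ n := map_zpow _ _ _
      _ = (p⁻¹) ^ n := by rw [h1]
      _ = (p ^ n)⁻¹ := by group
  -- g as a perm, and g is an involution
  have hgperm : g = p ^ n * s := by rw [hg, Equiv.Perm.mul_def]
  have hconj' : s * p ^ n * s = (p ^ n)⁻¹ := by rw [← hsinv] ; rw [hsinv] at hconj ⊢; exact hconj
  have hg1 : g * g = 1 := by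
    rw [hgperm]
    calc p ^ n * s * (p ^ n * s) = p ^ n * (s * p ^ n * s) := by group
      _ = p ^ n * (p ^ n)⁻¹ := by rw [hconj']
      _ = 1 := by group
  have hg2 : ∀ x, g (g x) = x := fun x => by
    have := congrArg (fun e : Equiv.Perm X => e x) hg1
    simpa [Equiv.Perm.mul_apply] using this
  -- continuity of g and g.symm
  have hc : Continuous ⇑g := by
    rw [hg]
    exact (cont_zpow φ n).comp σ.continuous
  have hc' : Continuous ⇑g.symm := by
    have h : ⇑g.symm = ⇑g := by
      funext x
      apply g.injective
      rw [Equiv.apply_symm_apply, hg2]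
    rw [h]; exact hc
  have hfree' : ∀ x ∈ U, g x ≠ x := by
    intro x hx h
    exact absurd (Set.eq_empty_iff_forall_notMem.1 hfree x ⟨hx, h⟩) (fun h' => h')
  obtain ⟨V, h1, h2, h3, h4⟩ := core_lemma g hc hc' U hU hfree' hg2
  have hgVU : ⇑g '' V ⊆ U := by
    rw [← hgU]; exact Set.image_mono h2
  have hUeq : U = V ∪ ⇑g '' V :=
    Set.Subset.antisymm h4 (Set.union_subset h2 hgVU)
  refine ⟨V, h1, h2, h3, hUeq, ?_⟩
  intro x
  by_cases hxV : x ∈ V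
  · rw [if_pos (hUeq ▸ Or.inl hxV : x ∈ U), if_pos hxV]
  · by_cases hxg : x ∈ ⇑g '' V
    · rw [if_pos (hUeq ▸ Or.inr hxg : x ∈ U), if_neg hxV, if_pos hxg]
      apply g.injective
      rw [Equiv.apply_symm_apply, hg2]
    · have hxU : x ∉ U := by
        rw [hUeq]; rintro (h | h); exacts [hxV h, hxg h]
      rw [if_neg hxU, if_neg hxV, if_neg hxg]
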